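/- Let a, b > 0, ν ∈ [0,1], n ≥ 1 a natural number, h = b/a, and K(t) = (1+t)²/(4t). Define r₀ = min{ν, 1-ν}, r_{k} = min{2 r_{k-1}, 1 − 2 r_{k-1}} for k ≥ 1, R_n = 1 − r_n, and m_k = ⌊2^k ν⌋. Then K(h^(1/2ⁿ))^{r_n} · a^(1-ν) b^ν ≤ (1-ν)a + νb − Σ_{k=0}^{n-1} r_k · [ (a^{1 − m_k/2^k} b^{m_k/2^k})^{1/2} − (a^{1 − (m_k+1)/2^k} b^{(m_k+1)/2^k})^{1/2} ]² ≤ K(h^(1/2ⁿ))^{R_n} · a^(1-ν) b^ν. -/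

import Mathlib

open Real Finset

noncomputable def Kc (t : ℝ) : ℝ := (1 + t)^2 / (4 * t)

lemma Kc_rpow (t r : ℝ) (ht : 0 < t) : Kc t ^ r = ((1+t)/2) ^ (2*r) * t ^ (-r) := by
  have h2 : ((1+t)/2) ^ (2:ℝ) = ((1+t)/2)^(2:ℕ) := by
    rw [← Real.rpow_natCast]; norm_num
  have h1 : Kc t = ((1+t)/2) ^ (2:ℝ) * t ^ (-1:ℝ) := by
    rw [h2, Real.rpow_neg_one]; unfold Kc
    rw [div_pow, inv_eq_one_div, div_mul_div_comm, mul_one]; norm_num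
  have hpos : (0:ℝ) < (1+t)/2 := by linarith
  rw [h1, Real.mul_rpow (by positivity) (by positivity), ← Real.rpow_mul hpos.le,
    ← Real.rpow_mul ht.le]
  ring_nf

lemma Kc_inv (t : ℝ) (ht : 0 < t) : Kc t⁻¹ = Kc t := by
  unfold Kc; rw [div_eq_div_iff (by positivity) (by positivity)]
  field_simp; ring

lemma Kc_pos (t : ℝ) (ht : 0 < t) : 0 < Kc t := by unfold Kc; positivity

lemma scalarL (t μ : ℝ) (ht : 0 < t) (h0 : 0 ≤ μ) (h1 : μ ≤ 1/2) :
    ((1+t)/2) ^ (2*μ) ≤ 1 - μ + μ * t := by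
  have := Real.geom_mean_le_arith_mean2_weighted (w₁ := 2*μ) (w₂ := 1-2*μ)
    (p₁ := (1+t)/2) (p₂ := 1) (by linarith) (by linarith) (by linarith) zero_le_one
    (by ring)
  rw [Real.one_rpow, mul_one] at this
  linarith [this]

lemma scalarU (t μ : ℝ) (ht : 0 < t) (h0 : 0 ≤ μ) (h1 : μ ≤ 1/2) :
    (1 - μ + μ * t) * t ^ (1 - 2*μ) ≤ ((1+t)/2) ^ (2 - 2*μ) := by
  have hd : (0:ℝ) < 2 - 2*μ := by linarith
  have hu : (0:ℝ) < 1 - μ + μ * t := by nlinarith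
  have key := Real.geom_mean_le_arith_mean2_weighted (w₁ := 1/(2-2*μ))
    (w₂ := (1-2*μ)/(2-2*μ)) (p₁ := 1 - μ + μ * t) (p₂ := t)
    (by positivity) (div_nonneg (by linarith) hd.le) hu.le ht.le
    (by rw [← add_div, div_eq_one_iff_eq hd.ne']; ring)
  have hsum : 1/(2-2*μ) * (1 - μ + μ * t) + (1-2*μ)/(2-2*μ) * t = (1+t)/2 := by
    rw [div_mul_eq_mul_div, div_mul_eq_mul_div, ← add_div, div_eq_div_iff hd.ne' two_ne_zero]; ring
  rw [hsum] at key
  have key2 := Real.rpow_le_rpow (by positivity) key hd.le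
  rw [Real.mul_rpow (by positivity) (by positivity), ← Real.rpow_mul hu.le,
    ← Real.rpow_mul ht.le] at key2
  rw [show 1/(2-2*μ) * (2 - 2*μ) = 1 by rw [div_mul_eq_mul_div, mul_div_assoc, div_self hd.ne', mul_one],
    show (1-2*μ)/(2-2*μ) * (2 - 2*μ) = 1 - 2*μ by rw [div_mul_eq_mul_div, mul_div_assoc, div_self hd.ne', mul_one]] at key2
  rwa [Real.rpow_one] at key2

lemma coreB_half (t μ : ℝ) (ht : 0 < t) (h0 : 0 ≤ μ) (hc : μ ≤ 1/2) :
    Kc t ^ μ * t ^ μ ≤ 1 - μ + μ*t ∧ 1 - μ + μ*t ≤ Kc t ^ (1-μ) * t ^ μ := by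
  constructor
  · rw [Kc_rpow t μ ht, mul_assoc, ← Real.rpow_add ht, neg_add_cancel, Real.rpow_zero,
      mul_one]
    exact scalarL t μ ht h0 hc
  · rw [Kc_rpow t (1-μ) ht, mul_assoc, ← Real.rpow_add ht,
      show -(1-μ) + μ = -(1 - 2*μ) by ring, Real.rpow_neg ht.le,
      show 2*(1-μ) = 2 - 2*μ by ring, ← div_eq_mul_inv,
      le_div_iff₀ (Real.rpow_pos_of_pos ht _)]
    exact scalarU t μ ht h0 hc

lemma coreB (t μ : ℝ) (ht : 0 < t) (h0 : 0 ≤ μ) (h1 : μ ≤ 1) :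
    Kc t ^ (min μ (1-μ)) * t ^ μ ≤ 1 - μ + μ*t ∧
    1 - μ + μ*t ≤ Kc t ^ (1 - min μ (1-μ)) * t ^ μ := by
  rcases le_or_gt μ (1/2) with hc | hc
  · rw [min_eq_left (by linarith)]
    exact coreB_half t μ ht h0 hc
  · rw [min_eq_right (by linarith)]
    have ht' : 0 < t⁻¹ := inv_pos.mpr ht
    obtain ⟨L, U⟩ := coreB_half t⁻¹ (1-μ) ht' (by linarith) (by linarith)
    rw [Kc_inv t ht, Real.inv_rpow ht.le, ← Real.rpow_neg ht.le,
      show -(1-μ) = μ - 1 by ring, show 1 - (1-μ) = μ by ring] at L U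
    have hmul : t ^ (μ-1) * t = t ^ μ := by
      nth_rewrite 2 [← Real.rpow_one t]
      rw [← Real.rpow_add ht]; norm_num
    have hrhs : (μ + (1-μ) * t⁻¹) * t = μ * t + (1-μ) := by
      field_simp
    constructor
    · have := mul_le_mul_of_nonneg_right L ht.le
      rw [mul_assoc, hmul, hrhs] at this
      linarith
    · have := mul_le_mul_of_nonneg_right U ht.le
      rw [mul_assoc, hmul, hrhs] at this
      rw [show 1 - (1-μ) = μ by ring]
      linarith

noncomputable def rseq (ν : ℝ) : ℕ → ℝ
  | 0 => min ν (1 - ν)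
  | k + 1 => min (2 * rseq ν k) (1 - 2 * rseq ν k)

noncomputable def mfl (ν : ℝ) (k : ℕ) : ℝ := ⌊(2:ℝ)^k * ν⌋

noncomputable def nuk (ν : ℝ) (k : ℕ) : ℝ := Int.fract ((2:ℝ)^k * ν)

lemma nuk_nonneg (ν : ℝ) (k : ℕ) : 0 ≤ nuk ν k := Int.fract_nonneg _
lemma nuk_lt_one (ν : ℝ) (k : ℕ) : nuk ν k < 1 := Int.fract_lt_one _

lemma mfl_eq (ν : ℝ) (k : ℕ) : mfl ν k = (2:ℝ)^k * ν - nuk ν k := by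
  unfold mfl nuk Int.fract; ring

lemma two_pow_succ_mul (ν : ℝ) (k : ℕ) :
    (2:ℝ)^(k+1) * ν = 2 * ((2:ℝ)^k * ν) := by rw [pow_succ]; ring

lemma fract_two_mul_lt {s : ℝ} (h0 : 0 ≤ s) (h1 : s < 1/2) :
    Int.fract (2*s) = 2*s :=
  Int.fract_eq_self.mpr ⟨by linarith, by linarith⟩

lemma fract_two_mul_ge {s : ℝ} (h0 : 1/2 ≤ s) (h1 : s < 1) :
    Int.fract (2*s) = 2*s - 1 := by
  have h : 2*s = ((1:ℤ):ℝ) + (2*s - 1) := by push_cast; ring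
  conv_lhs => rw [h]
  rw [Int.fract_intCast_add, Int.fract_eq_self.mpr ⟨by linarith, by linarith⟩]

lemma floor_two_mul_lt {s : ℝ} (h0 : 0 ≤ s) (h1 : s < 1/2) :
    (⌊2*s⌋ : ℝ) = 0 := by
  rw [Int.floor_eq_zero_iff.mpr ⟨by linarith, by linarith⟩]; norm_num

lemma floor_two_mul_ge {s : ℝ} (h0 : 1/2 ≤ s) (h1 : s < 1) :
    (⌊2*s⌋ : ℝ) = 1 := by
  have : ⌊2*s⌋ = (1:ℤ) := by
    rw [Int.floor_eq_iff]
    constructor <;> push_cast <;> linarith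
  rw [this]; norm_num

lemma nuk_succ (ν : ℝ) (k : ℕ) : nuk ν (k+1) = Int.fract (2 * nuk ν k) := by
  unfold nuk
  rw [two_pow_succ_mul]
  conv_lhs => rw [← Int.floor_add_fract ((2:ℝ)^k * ν)]
  rw [mul_add, show (2:ℝ) * (⌊(2:ℝ)^k * ν⌋:ℝ) = ((2*⌊(2:ℝ)^k * ν⌋ : ℤ):ℝ) by
    push_cast; ring, Int.fract_intCast_add]

lemma mfl_succ (ν : ℝ) (k : ℕ) :
    mfl ν (k+1) = 2 * mfl ν k + (⌊2 * nuk ν k⌋ : ℝ) := by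
  unfold mfl nuk
  rw [two_pow_succ_mul]
  conv_lhs => rw [← Int.floor_add_fract ((2:ℝ)^k * ν)]
  rw [mul_add, show (2:ℝ) * (⌊(2:ℝ)^k * ν⌋:ℝ) = ((2*⌊(2:ℝ)^k * ν⌋ : ℤ):ℝ) by
    push_cast; ring, Int.floor_intCast_add]
  push_cast
  ring

lemma rseq_eq (ν : ℝ) (hν : ν ∈ Set.Icc (0:ℝ) 1) (k : ℕ) :
    rseq ν k = min (nuk ν k) (1 - nuk ν k) := by
  induction k with
  | zero =>
    unfold rseq nuk
    rw [pow_zero, one_mul]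
    rcases eq_or_lt_of_le hν.2 with h1 | h1
    · rw [h1, Int.fract_one]; norm_num
    · rw [Int.fract_eq_self.mpr ⟨hν.1, h1⟩]
  | succ k ih =>
    have hs0 := nuk_nonneg ν k
    have hs1 := nuk_lt_one ν k
    show min (2 * rseq ν k) (1 - 2 * rseq ν k) = _
    rw [ih, nuk_succ]
    rcases lt_or_ge (nuk ν k) (1/2) with hc | hc
    · rw [min_eq_left (show nuk ν k ≤ 1 - nuk ν k by linarith),
        fract_two_mul_lt hs0 hc]
    · rw [min_eq_right (show 1 - nuk ν k ≤ nuk ν k by linarith),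
        fract_two_mul_ge hc hs1, min_comm]
      congr 1 <;> ring

noncomputable def Aab (a b ν : ℝ) (k : ℕ) : ℝ :=
  a ^ (1 - mfl ν k / 2^k) * b ^ (mfl ν k / 2^k)

noncomputable def Bab (a b ν : ℝ) (k : ℕ) : ℝ :=
  a ^ (1 - (mfl ν k + 1) / 2^k) * b ^ ((mfl ν k + 1) / 2^k)

lemma Aab_pos {a b : ℝ} (ha : 0 < a) (hb : 0 < b) (ν : ℝ) (k : ℕ) :
    0 < Aab a b ν k :=
  mul_pos (Real.rpow_pos_of_pos ha _) (Real.rpow_pos_of_pos hb _)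

lemma Bab_pos {a b : ℝ} (ha : 0 < a) (hb : 0 < b) (ν : ℝ) (k : ℕ) :
    0 < Bab a b ν k :=
  mul_pos (Real.rpow_pos_of_pos ha _) (Real.rpow_pos_of_pos hb _)

lemma sqrt_gm {a b : ℝ} (ha : 0 < a) (hb : 0 < b) (p q : ℝ) :
    Real.sqrt (a ^ p * b ^ q) = a ^ (p/2) * b ^ (q/2) := by
  rw [Real.sqrt_eq_rpow, Real.mul_rpow (Real.rpow_pos_of_pos ha _).le
    (Real.rpow_pos_of_pos hb _).le, ← Real.rpow_mul ha.le, ← Real.rpow_mul hb.le,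
    show p * (1/2) = p/2 by ring, show q * (1/2) = q/2 by ring]

lemma sqrtAB {a b : ℝ} (ha : 0 < a) (hb : 0 < b) (ν : ℝ) (k : ℕ) :
    Real.sqrt (Aab a b ν k) * Real.sqrt (Bab a b ν k)
      = a ^ (1 - (2 * mfl ν k + 1) / 2^(k+1)) * b ^ ((2 * mfl ν k + 1) / 2^(k+1)) := by
  have hP : (0:ℝ) < 2^k := by positivity
  unfold Aab Bab
  rw [sqrt_gm ha hb, sqrt_gm ha hb, mul_mul_mul_comm,
    ← Real.rpow_add ha, ← Real.rpow_add hb]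
  congr 1
  · congr 1
    rw [pow_succ]; field_simp; ring
  · rw [pow_succ]; field_simp; ring

lemma step {a b ν : ℝ} (ha : 0 < a) (hb : 0 < b) (hν : ν ∈ Set.Icc (0:ℝ) 1) (k : ℕ) :
    (1 - nuk ν (k+1)) * Aab a b ν (k+1) + nuk ν (k+1) * Bab a b ν (k+1)
      = (1 - nuk ν k) * Aab a b ν k + nuk ν k * Bab a b ν k
        - rseq ν k * (Real.sqrt (Aab a b ν k) - Real.sqrt (Bab a b ν k))^2 := by
  have hP : (0:ℝ) < 2^k := by positivity
  have hs0 := nuk_nonneg ν k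
  have hs1 := nuk_lt_one ν k
  have hA := Aab_pos ha hb ν k
  have hB := Bab_pos ha hb ν k
  have hsq : (Real.sqrt (Aab a b ν k) - Real.sqrt (Bab a b ν k))^2
      = Aab a b ν k + Bab a b ν k
        - 2 * (Real.sqrt (Aab a b ν k) * Real.sqrt (Bab a b ν k)) := by
    rw [sub_sq, Real.sq_sqrt hA.le, Real.sq_sqrt hB.le]; ring
  rw [hsq, sqrtAB ha hb, rseq_eq ν hν, nuk_succ]
  rcases lt_or_ge (nuk ν k) (1/2) with hc | hc
  · have hfl : (⌊2 * nuk ν k⌋ : ℝ) = 0 := floor_two_mul_lt hs0 hc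
    have hfr : Int.fract (2 * nuk ν k) = 2 * nuk ν k := fract_two_mul_lt hs0 hc
    have hA' : Aab a b ν (k+1) = Aab a b ν k := by
      unfold Aab
      rw [mfl_succ, hfl, add_zero]
      congr 2
      · congr 1
        rw [pow_succ]; field_simp
      · rw [pow_succ]; field_simp
    have hB' : Bab a b ν (k+1)
        = a ^ (1 - (2 * mfl ν k + 1) / 2^(k+1)) * b ^ ((2 * mfl ν k + 1) / 2^(k+1)) := by
      unfold Bab
      rw [mfl_succ, hfl, add_zero]
    rw [hA', hB', hfr, min_eq_left (by linarith)]
    ring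
  · have hfl : (⌊2 * nuk ν k⌋ : ℝ) = 1 := floor_two_mul_ge hc hs1
    have hfr : Int.fract (2 * nuk ν k) = 2 * nuk ν k - 1 := fract_two_mul_ge hc hs1
    have hA' : Aab a b ν (k+1)
        = a ^ (1 - (2 * mfl ν k + 1) / 2^(k+1)) * b ^ ((2 * mfl ν k + 1) / 2^(k+1)) := by
      unfold Aab
      rw [mfl_succ, hfl]
    have hB' : Bab a b ν (k+1) = Bab a b ν k := by
      unfold Bab
      rw [mfl_succ, hfl]
      congr 2
      · congr 1
        rw [pow_succ]; field_simp; ring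
      · rw [pow_succ]; field_simp; ring
    rw [hA', hB', hfr, min_eq_right (by linarith)]
    ring

lemma tele {a b ν : ℝ} (ha : 0 < a) (hb : 0 < b) (hν : ν ∈ Set.Icc (0:ℝ) 1) (n : ℕ) :
    (1 - ν) * a + ν * b
      - ∑ k ∈ Finset.range n,
          rseq ν k * (Real.sqrt (Aab a b ν k) - Real.sqrt (Bab a b ν k))^2
      = (1 - nuk ν n) * Aab a b ν n + nuk ν n * Bab a b ν n := by
  induction n with
  | zero =>
    simp only [Finset.range_zero, Finset.sum_empty, sub_zero]
    rcases eq_or_lt_of_le hν.2 with h1 | h1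
    · subst h1
      have hnu : nuk 1 0 = 0 := by unfold nuk; norm_num
      have hm : mfl 1 0 = 1 := by unfold mfl; norm_num
      unfold Aab Bab
      rw [hnu, hm]
      norm_num
    · have hnu : nuk ν 0 = ν := by
        unfold nuk; rw [pow_zero, one_mul, Int.fract_eq_self.mpr ⟨hν.1, h1⟩]
      have hm : mfl ν 0 = 0 := by
        unfold mfl; rw [pow_zero, one_mul, Int.floor_eq_zero_iff.mpr ⟨hν.1, h1⟩]
        norm_num
      unfold Aab Bab
      rw [hnu, hm]
      norm_num
  | succ n ih =>
    rw [Finset.sum_range_succ, ← sub_sub, ih, step ha hb hν n]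

lemma tele' {a b ν : ℝ} (ha : 0 < a) (hb : 0 < b) (hν : ν ∈ Set.Icc (0:ℝ) 1) (n : ℕ) :
    (1 - ν) * a + ν * b
      - (∑ k ∈ Finset.range n, rseq ν k *
          (Real.sqrt (a ^ (1 - mfl ν k / 2^k) * b ^ (mfl ν k / 2^k))
            - Real.sqrt (a ^ (1 - (mfl ν k + 1) / 2^k) * b ^ ((mfl ν k + 1) / 2^k)))^2)
      = (1 - nuk ν n) * Aab a b ν n + nuk ν n * Bab a b ν n := tele ha hb hν n

lemma t_decomp {a b : ℝ} (ha : 0 < a) (hb : 0 < b) (n : ℕ) (r : ℝ) :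
    ((b/a) ^ ((1:ℝ)/2^n)) ^ r = b ^ (r / 2^n) * a ^ (-(r / 2^n)) := by
  have hba : (0:ℝ) < b/a := div_pos hb ha
  rw [← Real.rpow_mul hba.le, show (1:ℝ)/2^n * r = r / 2^n by ring,
    Real.div_rpow hb.le ha.le, Real.rpow_neg ha.le, div_eq_mul_inv]

lemma Amul {a b : ℝ} (ha : 0 < a) (hb : 0 < b) (p e : ℝ) :
    (a ^ (1-p) * b ^ p) * (b ^ e * a ^ (-e)) = a ^ (1-(p+e)) * b ^ (p+e) := by
  rw [show 1-(p+e) = (1-p) + (-e) by ring, Real.rpow_add ha, Real.rpow_add hb]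
  ring

theorem stmt7 (a b ν : ℝ) (ha : 0 < a) (hb : 0 < b) (hν : ν ∈ Set.Icc (0:ℝ) 1)
    (n : ℕ) (hn : 1 ≤ n) (h : ℝ) (hh : h = b / a) :
    Kc (h ^ ((1:ℝ)/2^n)) ^ rseq ν n * (a ^ (1 - ν) * b ^ ν) ≤
      (1 - ν) * a + ν * b - (∑ k ∈ Finset.range n, rseq ν k * (Real.sqrt (a ^ (1 - mfl ν k / 2^k) * b ^ (mfl ν k / 2^k)) - Real.sqrt (a ^ (1 - (mfl ν k + 1) / 2^k) * b ^ ((mfl ν k + 1) / 2^k)))^2) ∧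
    (1 - ν) * a + ν * b - (∑ k ∈ Finset.range n, rseq ν k * (Real.sqrt (a ^ (1 - mfl ν k / 2^k) * b ^ (mfl ν k / 2^k)) - Real.sqrt (a ^ (1 - (mfl ν k + 1) / 2^k) * b ^ ((mfl ν k + 1) / 2^k)))^2) ≤
      Kc (h ^ ((1:ℝ)/2^n)) ^ (1 - rseq ν n) * (a ^ (1 - ν) * b ^ ν) := by
  subst hh
  have hba : (0:ℝ) < b/a := div_pos hb ha
  have htpos : 0 < (b/a) ^ ((1:ℝ)/2^n) := Real.rpow_pos_of_pos hba _
  have hP : (0:ℝ) < 2^n := by positivity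
  have hApos := Aab_pos ha hb ν n
  have hBt : Aab a b ν n * ((b/a) ^ ((1:ℝ)/2^n)) = Bab a b ν n := by
    have h1 := t_decomp ha hb n 1
    rw [Real.rpow_one] at h1
    rw [h1]
    unfold Aab Bab
    rw [Amul ha hb, show mfl ν n / 2^n + 1/2^n = (mfl ν n + 1)/2^n from
      (add_div _ _ _).symm]
  have hAt : Aab a b ν n * ((b/a) ^ ((1:ℝ)/2^n)) ^ nuk ν n = a ^ (1-ν) * b ^ ν := by
    rw [t_decomp ha hb n (nuk ν n)]
    unfold Aab
    rw [Amul ha hb]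
    have hex : mfl ν n / 2^n + nuk ν n / 2^n = ν := by
      rw [mfl_eq]; field_simp; ring
    rw [hex]
  rw [tele' ha hb hν n]
  obtain ⟨L, U⟩ := coreB ((b/a) ^ ((1:ℝ)/2^n)) (nuk ν n) htpos (nuk_nonneg ν n)
    (nuk_lt_one ν n).le
  rw [← rseq_eq ν hν n] at L U
  constructor
  · calc Kc ((b/a) ^ ((1:ℝ)/2^n)) ^ rseq ν n * (a ^ (1-ν) * b ^ ν)
        = Aab a b ν n * (Kc ((b/a) ^ ((1:ℝ)/2^n)) ^ rseq ν n
            * ((b/a) ^ ((1:ℝ)/2^n)) ^ nuk ν n) := by rw [← hAt]; ring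
      _ ≤ Aab a b ν n * (1 - nuk ν n + nuk ν n * ((b/a) ^ ((1:ℝ)/2^n))) :=
          mul_le_mul_of_nonneg_left L hApos.le
      _ = (1 - nuk ν n) * Aab a b ν n + nuk ν n * Bab a b ν n := by
          rw [← hBt]; ring
  · calc (1 - nuk ν n) * Aab a b ν n + nuk ν n * Bab a b ν n
        = Aab a b ν n * (1 - nuk ν n + nuk ν n * ((b/a) ^ ((1:ℝ)/2^n))) := by
          rw [← hBt]; ring
      _ ≤ Aab a b ν n * (Kc ((b/a) ^ ((1:ℝ)/2^n)) ^ (1 - rseq ν n)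
            * ((b/a) ^ ((1:ℝ)/2^n)) ^ nuk ν n) :=
          mul_le_mul_of_nonneg_left U hApos.le
      _ = Kc ((b/a) ^ ((1:ℝ)/2^n)) ^ (1 - rseq ν n) * (a ^ (1-ν) * b ^ ν) := by
          rw [← hAt]; ring
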